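/- arXiv:1809.04756 — 2 statements merged into one kernel-verified Lean document; each statement's English description precedes it below -/
import Mathlib

section
/- For every t ≥ 1, m_t − m̃_t = (∏_{i=0}^{t−1} A_{t−i}) (m_0 − m̃_0) + ∑_{i=0}^{t−2} (∏_{j=0}^{i} A_{t−j}) (B_{t−1−i} + C_{t−1−i}) + B_t + C_t, where ∏_{j=0}^{i} A_{t−j} denotes the ordered product A_t A_{t−1} ⋯ A_{t−i}. -/
open Matrix

/-- Closed form for the difference between unspoofed and spoofed Kalman mean
estimates:
`m_t − m̃_t = (∏_{i=0}^{t−1} A_{t−i}) (m_0 − m̃_0)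
  + ∑_{i=0}^{t−2} (∏_{j=0}^{i} A_{t−j}) (B_{t−1−i} + C_{t−1−i}) + B_t + C_t`,
where the matrix products are ordered with `A_t` leftmost. -/
theorem spoofed_kf_difference_closed_form
    (F G H : Matrix (Fin 2) (Fin 2) ℝ)
    (K K' : ℕ → Matrix (Fin 2) (Fin 2) ℝ)
    (u z ε : ℕ → Fin 2 → ℝ)
    (m m' : ℕ → Fin 2 → ℝ)
    (A : ℕ → Matrix (Fin 2) (Fin 2) ℝ)
    (B C : ℕ → Fin 2 → ℝ)
    (hm : ∀ t : ℕ, 1 ≤ t →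
      m t = (1 - K t * H) *ᵥ (F *ᵥ m (t - 1) + G *ᵥ u (t - 1)) + K t *ᵥ z t)
    (hm' : ∀ t : ℕ, 1 ≤ t →
      m' t = (1 - K' t * H) *ᵥ (F *ᵥ m' (t - 1) + G *ᵥ u (t - 1))
              + K' t *ᵥ (z t + ε t))
    (hA : ∀ t : ℕ, A t = F - K' t * H * F)
    (hB : ∀ t : ℕ, B t = (K t - K' t) *ᵥ (z t - H *ᵥ (F *ᵥ m (t - 1) + G *ᵥ u (t - 1))))
    (hC : ∀ t : ℕ, C t = -(K' t *ᵥ ε t)) :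
    ∀ t : ℕ, 1 ≤ t →
      m t - m' t =
        ((List.range t).map (fun i => A (t - i))).prod *ᵥ (m 0 - m' 0)
        + ∑ i ∈ Finset.range (t - 1),
            ((List.range (i + 1)).map (fun j => A (t - j))).prod *ᵥ
              (B (t - 1 - i) + C (t - 1 - i))
        + B t + C t := by
  have key : ∀ t : ℕ, 1 ≤ t →
      m t - m' t = A t *ᵥ (m (t - 1) - m' (t - 1)) + B t + C t := by
    intro t ht
    rw [hm t ht, hm' t ht, hA, hB, hC]
    simp only [Matrix.sub_mulVec, Matrix.add_mulVec, Matrix.one_mulVec,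
      Matrix.mulVec_add, Matrix.mulVec_sub, ← Matrix.mulVec_mulVec]
    abel
  have hprod : ∀ s n : ℕ,
      ((List.range (n+1)).map (fun j => A (s + 1 - j))).prod
        = A (s+1) * ((List.range n).map (fun j => A (s - j))).prod := by
    intro s n
    rw [List.range_succ_eq_map]
    simp only [List.map_cons, List.map_map, List.prod_cons, Nat.sub_zero]
    simp [Function.comp_def, Nat.succ_sub_succ]
  have main : ∀ k : ℕ, m (k+1) - m' (k+1) =
      ((List.range (k+1)).map (fun i => A (k+1-i))).prod *ᵥ (m 0 - m' 0)
      + ∑ i ∈ Finset.range k,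
          ((List.range (i+1)).map (fun j => A (k+1-j))).prod *ᵥ (B (k-i) + C (k-i))
      + B (k+1) + C (k+1) := by
    intro k
    induction k with
    | zero =>
      simpa [List.range_succ] using key 1 le_rfl
    | succ k ih =>
      have hk : m (k+1+1) - m' (k+1+1)
          = A (k+1+1) *ᵥ (m (k+1) - m' (k+1)) + B (k+1+1) + C (k+1+1) :=
        key (k+2) (by omega)
      have mulVec_sum : ∀ (M : Matrix (Fin 2) (Fin 2) ℝ) (sf : Finset ℕ) (v : ℕ → Fin 2 → ℝ),
          M *ᵥ (∑ i ∈ sf, v i) = ∑ i ∈ sf, M *ᵥ v i := by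
        intro M sf v
        rw [← Matrix.mulVecLin_apply, map_sum]
        simp [Matrix.mulVecLin_apply]
      rw [hk, ih, Finset.sum_range_succ']
      have h1 : ((List.range (k+1+1)).map (fun i => A (k+1+1-i))).prod
          = A (k+1+1) * ((List.range (k+1)).map (fun i => A (k+1-i))).prod := hprod (k+1) (k+1)
      have h2 : ∀ i, ((List.range (i+1+1)).map (fun j => A (k+1+1-j))).prod
          = A (k+1+1) * ((List.range (i+1)).map (fun j => A (k+1-j))).prod := fun i => hprod (k+1) (i+1)
      have h3 : ((List.range (0+1)).map (fun j => A (k+1+1-j))).prod = A (k+1+1) := by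
        simp [List.range_succ]
      simp only [h1, h2, h3, Nat.succ_sub_succ, Nat.sub_zero, ← Matrix.mulVec_mulVec,
        Matrix.mulVec_add, mulVec_sum, Finset.sum_add_distrib]
      abel
  intro t ht
  obtain ⟨k, rfl⟩ : ∃ k, t = k + 1 := ⟨t - 1, by omega⟩
  simpa only [Nat.add_sub_cancel] using main k
end

section
/- If the two filters use equal gains K_t = K̃_t for all t ≥ 1 and equal initial means m_0 = m̃_0, then for every t ≥ 1, m_t − m̃_t = ∑_{i=0}^{t−2} (∏_{j=0}^{i} A_{t−j}) C_{t−1−i} + C_t; in particular the difference m_t − m̃_t is determined by the gains and spoofing signals alone and does not involve the measurements z_t, the control inputs u_t, or the initial mean. -/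
open Matrix

private lemma list_prod_range_succ_comm {M : Type*} [Monoid M] (n : ℕ) (f : ℕ → M) :
    ((List.range (n+1)).map f).prod = f 0 * ((List.range n).map (fun j => f (j+1))).prod := by
  simp only [List.range_succ_eq_map, List.map_cons, List.prod_cons, List.map_map]
  rfl

private lemma kf_step (F H K' : Matrix (Fin 2) (Fin 2) ℝ) (x x' g zz e : Fin 2 → ℝ) :
    ((1 - K' * H) *ᵥ (F *ᵥ x + g) + K' *ᵥ zz)
      - ((1 - K' * H) *ᵥ (F *ᵥ x' + g) + K' *ᵥ (zz + e))
    = (F - K' * H * F) *ᵥ (x - x') + -(K' *ᵥ e) := by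
  have h1 : (F - K' * H * F) *ᵥ (x - x') = (1 - K' * H) *ᵥ (F *ᵥ (x - x')) := by
    rw [mulVec_mulVec, Matrix.sub_mul, Matrix.one_mul, Matrix.mul_assoc]
  rw [h1, Matrix.mulVec_sub F, Matrix.mulVec_sub (1 - K' * H),
    Matrix.mulVec_add (1 - K' * H) (F *ᵥ x) g, Matrix.mulVec_add (1 - K' * H) (F *ᵥ x') g,
    Matrix.mulVec_add K' zz e]
  abel

/-- If the unspoofed and spoofed filters use equal gains and equal initial
means, then `m_t − m̃_t = ∑_{i=0}^{t−2} (∏_{j=0}^{i} A_{t−j}) C_{t−1−i} + C_t`;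
the difference depends only on the gains and the spoofing signals. -/
theorem spoofed_kf_difference_equal_gains
    (F G H : Matrix (Fin 2) (Fin 2) ℝ)
    (K K' : ℕ → Matrix (Fin 2) (Fin 2) ℝ)
    (u z ε : ℕ → Fin 2 → ℝ)
    (m m' : ℕ → Fin 2 → ℝ)
    (A : ℕ → Matrix (Fin 2) (Fin 2) ℝ)
    (C : ℕ → Fin 2 → ℝ)
    (hm : ∀ t : ℕ, 1 ≤ t →
      m t = (1 - K t * H) *ᵥ (F *ᵥ m (t - 1) + G *ᵥ u (t - 1)) + K t *ᵥ z t)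
    (hm' : ∀ t : ℕ, 1 ≤ t →
      m' t = (1 - K' t * H) *ᵥ (F *ᵥ m' (t - 1) + G *ᵥ u (t - 1))
              + K' t *ᵥ (z t + ε t))
    (hA : ∀ t : ℕ, A t = F - K' t * H * F)
    (hC : ∀ t : ℕ, C t = -(K' t *ᵥ ε t))
    (hKeq : ∀ t : ℕ, 1 ≤ t → K t = K' t)
    (hm0 : m 0 = m' 0) :
    ∀ t : ℕ, 1 ≤ t →
      m t - m' t =
        ∑ i ∈ Finset.range (t - 1),
            ((List.range (i + 1)).map (fun j => A (t - j))).prod *ᵥ C (t - 1 - i)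
        + C t := by
  have hrec : ∀ t : ℕ, 1 ≤ t →
      m t - m' t = A t *ᵥ (m (t-1) - m' (t-1)) + C t := by
    intro t ht
    rw [hm t ht, hm' t ht, hKeq t ht, hA, hC]
    exact kf_step F H (K' t) (m (t-1)) (m' (t-1)) (G *ᵥ u (t-1)) (z t) (ε t)
  intro t ht
  induction t with
  | zero => omega
  | succ n ih =>
    rcases Nat.eq_or_lt_of_le ht with h1 | h1
    · have hn : n = 0 := by omega
      subst hn
      simp only [Nat.sub_self, Finset.range_zero, Finset.sum_empty, zero_add]
      have := hrec 1 le_rfl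
      simp only [Nat.sub_self, hm0, sub_self, mulVec_zero, zero_add] at this
      exact this
    · have hn : 1 ≤ n := by omega
      obtain ⟨k, rfl⟩ : ∃ k, n = k + 1 := ⟨n - 1, by omega⟩
      have hrec' := hrec (k+1+1) (by omega)
      simp only [Nat.add_sub_cancel] at hrec'
      rw [hrec', ih hn]
      simp only [Nat.add_sub_cancel]
      rw [Matrix.mulVec_add]
      have hsum := map_sum (A (k+1+1)).mulVecLin
        (fun i => ((List.range (i + 1)).map (fun j => A (k+1 - j))).prod *ᵥ C (k - i))
        (Finset.range k)
      simp only [mulVecLin_apply, mulVec_mulVec] at hsum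
      rw [hsum]
      congr 1
      rw [Finset.sum_range_succ']
      have h0 : ((List.range (0+1)).map (fun j => A (k+1+1-j))).prod = A (k+1+1) := by
        simp [List.range_succ]
      rw [h0]
      simp only [Nat.sub_zero]
      congr 1
      apply Finset.sum_congr rfl
      intro i hi
      have hi' : i < k := Finset.mem_range.mp hi
      have hprod : ((List.range (i+1+1)).map (fun j => A (k+1+1-j))).prod
          = A (k+1+1) * ((List.range (i+1)).map (fun j => A (k+1-j))).prod := by
        rw [list_prod_range_succ_comm]
        simp only [Nat.sub_zero]
        congr 1
        apply congrArg
        apply List.map_congr_left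
        intro j hj
        have hj' : j ≤ k := by
          have := List.mem_range.mp hj; omega
        have harg : k + 1 + 1 - (j + 1) = k + 1 - j := by omega
        rw [harg]
      rw [hprod]
      have harg2 : k + 1 - (i + 1) = k - i := by omega
      rw [harg2]
end
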